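/- If f(z) = ∑_{n≥1} a_n z^n is analytic in the unit disk 𝔻 with f(0) = 0 and |f(z)| ≤ 1 for all z ∈ 𝔻, then ∑_{n≥1} |a_n| r^n ≤ 1 for all 0 ≤ r ≤ 1/√2. -/

import Mathlib

open MeasureTheory Filter Real Topology AddCircle

section aux

open scoped Real

/-- On each circle of radius `ρ < 1`, finite partial sums of squared coefficient norms
are bounded by 1 (Parseval). -/
lemma bohr_aux_rho (f : ℂ → ℂ) (a : ℕ → ℂ)
    (hf : ∀ z ∈ Metric.ball (0 : ℂ) 1, HasSum (fun n : ℕ => a n * z ^ n) (f z))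
    (hb : ∀ z ∈ Metric.ball (0 : ℂ) 1, ‖f z‖ ≤ 1)
    {ρ : ℝ} (hρ0 : 0 ≤ ρ) (hρ1 : ρ < 1) (s : Finset ℕ) :
    ∑ n ∈ s, (‖a n‖ * ρ ^ n) ^ 2 ≤ 1 := by
  haveI : Fact (0 < 2 * π) := ⟨Real.two_pi_pos⟩
  set c : ℕ → ℂ := fun m => a m * (ρ : ℂ) ^ m with hc
  have hcnorm : ∀ m, ‖c m‖ = ‖a m‖ * ρ ^ m := by
    intro m
    simp [hc, norm_mul, norm_pow, Complex.norm_real, Real.norm_of_nonneg hρ0, _root_.abs_of_nonneg hρ0]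
  -- summability of ∑ ‖c m‖
  have hsumc : Summable fun m => ‖c m‖ := by
    obtain ⟨σ, hρσ, hσ1⟩ := exists_between hρ1
    have hσ0 : 0 < σ := lt_of_le_of_lt hρ0 hρσ
    have hz : (σ : ℂ) ∈ Metric.ball (0 : ℂ) 1 := by
      rw [Metric.mem_ball, dist_zero_right, Complex.norm_real, Real.norm_of_nonneg hσ0.le]
      exact hσ1
    have hS := (hf _ hz).summable
    have h0 : Tendsto (fun m => ‖a m * (σ : ℂ) ^ m‖) atTop (𝓝 0) := by
      simpa using hS.tendsto_atTop_zero.norm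
    obtain ⟨C, hC⟩ := h0.isBoundedUnder_le.bddAbove_range
    simp only [mem_upperBounds, Set.mem_range, forall_exists_index] at hC
    have hC' : ∀ m, ‖a m‖ * σ ^ m ≤ C := by
      intro m
      have := hC _ m rfl
      simpa [norm_mul, norm_pow, Complex.norm_real, Real.norm_of_nonneg hσ0.le, _root_.abs_of_nonneg hσ0.le] using this
    have hgeo : Summable fun m : ℕ => C * (ρ / σ) ^ m :=
      (summable_geometric_of_lt_one (by positivity) (by
        rw [div_lt_one hσ0]; exact hρσ)).mul_left C
    refine hgeo.of_nonneg_of_le (fun m => norm_nonneg _) fun m => ?_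
    rw [hcnorm]
    have hkey : ‖a m‖ * ρ ^ m = (‖a m‖ * σ ^ m) * (ρ / σ) ^ m := by
      rw [div_pow]
      field_simp
    rw [hkey]
    exact mul_le_mul_of_nonneg_right (hC' m) (by positivity)
  -- the boundary function
  set G : AddCircle (2 * π) → ℂ := fun x => ∑' m : ℕ, c m * fourier (m : ℤ) x with hG
  have hfnorm : ∀ (n : ℤ) (t : AddCircle (2 * π)), ‖fourier n t‖ = 1 := fun n t =>
    Circle.norm_coe _
  have hGcont : Continuous G := by
    refine continuous_tsum (fun m => continuous_const.mul (fourier (m : ℤ)).continuous)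
      hsumc fun m x => ?_
    rw [norm_mul, hfnorm, mul_one]
  -- value of G on the circle
  have hfour : ∀ (m : ℕ) (x₀ : ℝ),
      (fourier (m : ℤ) (↑x₀ : AddCircle (2 * π)) : ℂ) = Complex.exp ((x₀ : ℂ) * Complex.I) ^ m := by
    intro m x₀
    rw [fourier_coe_apply, ← Complex.exp_nat_mul]
    congr 1
    have hπ : (π : ℂ) ≠ 0 := by exact_mod_cast Real.pi_ne_zero
    push_cast
    field_simp
  have hzball : ∀ x₀ : ℝ, (↑ρ * Complex.exp ((x₀ : ℂ) * Complex.I)) ∈ Metric.ball (0 : ℂ) 1 := by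
    intro x₀
    rw [Metric.mem_ball, dist_zero_right, norm_mul]
    have h1 : ‖Complex.exp ((x₀ : ℂ) * Complex.I)‖ = 1 := Complex.norm_exp_ofReal_mul_I x₀
    rw [h1, mul_one, Complex.norm_real, Real.norm_of_nonneg hρ0]
    exact hρ1
  have hGval : ∀ x₀ : ℝ,
      G (↑x₀ : AddCircle (2 * π)) = f (↑ρ * Complex.exp ((x₀ : ℂ) * Complex.I)) := by
    intro x₀
    have h := hf _ (hzball x₀)
    have heq : (fun m : ℕ => a m * (↑ρ * Complex.exp ((x₀ : ℂ) * Complex.I)) ^ m)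
        = fun m : ℕ => c m * fourier (m : ℤ) (↑x₀ : AddCircle (2 * π)) := by
      funext m
      rw [hfour, hc, mul_pow]
      ring
    rw [heq] at h
    exact h.tsum_eq
  have hGle : ∀ x : AddCircle (2 * π), ‖G x‖ ≤ 1 := by
    intro x
    induction x using QuotientAddGroup.induction_on with
    | H x₀ => rw [hGval x₀]; exact hb _ (hzball x₀)
  -- bundle and move to L²
  set GC : C(AddCircle (2 * π), ℂ) := ⟨G, hGcont⟩ with hGC
  set gG : Lp ℂ 2 (haarAddCircle (T := 2 * π)) :=
    ContinuousMap.toLp (E := ℂ) 2 haarAddCircle ℂ GC with hGL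
  -- Fourier coefficients of G
  have horth : ∀ n m : ℤ,
      (∫ t : AddCircle (2 * π), (fourier (-n) t : ℂ) * fourier m t ∂haarAddCircle)
        = if n = m then 1 else 0 := by
    intro n m
    have h := orthonormal_iff_ite.mp (orthonormal_fourier (T := 2 * π)) n m
    rw [ContinuousMap.inner_toLp haarAddCircle (fourier n) (fourier m)] at h
    simp only [← fourier_neg] at h
    rw [← h]
    congr 1
    funext t
    ring
  have hck : ∀ k : ℕ, fourierCoeff G (k : ℤ) = c k := by
    intro k
    have hFint : ∀ m : ℕ, Integrable
        (fun t : AddCircle (2 * π) => (fourier (-(k : ℤ)) t : ℂ) * (c m * fourier (m : ℤ) t))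
        haarAddCircle := by
      intro m
      refine Integrable.mono' (integrable_const ‖c m‖)
        (((fourier _).continuous.mul (continuous_const.mul
          (fourier _).continuous)).aestronglyMeasurable)
        (Filter.Eventually.of_forall fun t => ?_)
      rw [norm_mul, norm_mul, hfnorm, hfnorm, one_mul, mul_one]
    have hFsum : Summable fun m : ℕ => ∫ t : AddCircle (2 * π),
        ‖(fourier (-(k : ℤ)) t : ℂ) * (c m * fourier (m : ℤ) t)‖ ∂haarAddCircle := by
      refine hsumc.of_nonneg_of_le
        (fun m => integral_nonneg fun t => norm_nonneg _) fun m => ?_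
      have heq : (fun t : AddCircle (2 * π) =>
          ‖(fourier (-(k : ℤ)) t : ℂ) * (c m * fourier (m : ℤ) t)‖) = fun _ => ‖c m‖ := by
        funext t
        rw [norm_mul, norm_mul, hfnorm, hfnorm, one_mul, mul_one]
      rw [heq, integral_const, probReal_univ, one_smul]
    have hhs := hasSum_integral_of_summable_integral_norm hFint hFsum
    have h1 : (∫ t : AddCircle (2 * π),
        (∑' m : ℕ, (fourier (-(k : ℤ)) t : ℂ) * (c m * fourier (m : ℤ) t)) ∂haarAddCircle)
          = fourierCoeff G (k : ℤ) := by
      rw [fourierCoeff]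
      congr 1
      funext t
      rw [tsum_mul_left]
      simp only [smul_eq_mul, hG]
    rw [h1] at hhs
    have h2 : (fun m : ℕ => ∫ t : AddCircle (2 * π),
        (fourier (-(k : ℤ)) t : ℂ) * (c m * fourier (m : ℤ) t) ∂haarAddCircle)
          = fun m : ℕ => if m = k then c k else 0 := by
      funext m
      have : (fun t : AddCircle (2 * π) =>
          (fourier (-(k : ℤ)) t : ℂ) * (c m * fourier (m : ℤ) t))
            = fun t => c m * ((fourier (-(k : ℤ)) t : ℂ) * fourier (m : ℤ) t) := by
        funext t; ring
      rw [this, integral_const_mul, horth]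
      by_cases h : m = k
      · subst h; simp
      · rw [if_neg (fun h' => h (Nat.cast_injective h').symm), if_neg h, mul_zero]
    rw [h2] at hhs
    exact hhs.unique (hasSum_ite_eq k (c k))
  have hGLck : ∀ k : ℕ, fourierCoeff (gG : AddCircle (2 * π) → ℂ) (k : ℤ) = c k := by
    intro k
    rw [hGL, fourierCoeff_toLp]
    exact hck k
  -- Parseval
  have hparseval := tsum_sq_fourierCoeff gG
  have hZsummable : Summable fun i : ℤ => ‖fourierCoeff (gG : AddCircle (2 * π) → ℂ) i‖ ^ 2 := by
    have h := (lp.memℓp (fourierBasis.repr gG)).summable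
      (by norm_num : (0 : ℝ) < (2 : ENNReal).toReal)
    refine h.congr fun i => ?_
    rw [fourierBasis_repr]
    norm_num
  have hint1 : (∫ t : AddCircle (2 * π), ‖(gG : AddCircle (2 * π) → ℂ) t‖ ^ 2 ∂haarAddCircle)
      ≤ 1 := by
    have hae : ⇑gG =ᵐ[haarAddCircle (T := 2 * π)] G := by
      rw [hGL]
      exact ContinuousMap.coeFn_toLp haarAddCircle GC
    have h1 : (∫ t : AddCircle (2 * π), ‖(gG : AddCircle (2 * π) → ℂ) t‖ ^ 2 ∂haarAddCircle)
        = ∫ t : AddCircle (2 * π), ‖G t‖ ^ 2 ∂haarAddCircle := by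
      refine integral_congr_ae (hae.mono fun t ht => ?_)
      simp only [ht]
    rw [h1]
    have hIntG : Integrable (fun t : AddCircle (2 * π) => ‖G t‖ ^ 2) haarAddCircle := by
      refine Integrable.mono' (integrable_const 1)
        ((hGcont.norm.pow 2).aestronglyMeasurable)
        (Filter.Eventually.of_forall fun t => ?_)
      rw [Real.norm_of_nonneg (by positivity)]
      exact pow_le_one₀ (norm_nonneg _) (hGle t)
    calc (∫ t : AddCircle (2 * π), ‖G t‖ ^ 2 ∂haarAddCircle)
        ≤ ∫ _ : AddCircle (2 * π), (1 : ℝ) ∂haarAddCircle := by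
          refine integral_mono hIntG (integrable_const 1) fun t => ?_
          exact pow_le_one₀ (norm_nonneg _) (hGle t)
      _ = 1 := by rw [integral_const, probReal_univ, one_smul]
  -- conclude
  have hterm : ∀ n ∈ s, (‖a n‖ * ρ ^ n) ^ 2
      = ‖fourierCoeff (gG : AddCircle (2 * π) → ℂ) (n : ℤ)‖ ^ 2 := by
    intro n _
    rw [hGLck n, hcnorm]
  calc ∑ n ∈ s, (‖a n‖ * ρ ^ n) ^ 2
      = ∑ n ∈ s, ‖fourierCoeff (gG : AddCircle (2 * π) → ℂ) (n : ℤ)‖ ^ 2 :=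
        Finset.sum_congr rfl hterm
    _ = ∑ i ∈ s.image (Nat.cast : ℕ → ℤ),
          ‖fourierCoeff (gG : AddCircle (2 * π) → ℂ) i‖ ^ 2 := by
        rw [Finset.sum_image (fun x _ y _ h => Nat.cast_injective h)]
    _ ≤ ∑' i : ℤ, ‖fourierCoeff (gG : AddCircle (2 * π) → ℂ) i‖ ^ 2 :=
        Summable.sum_le_tsum _ (fun i _ => by positivity) hZsummable
    _ ≤ 1 := by rw [hparseval]; exact hint1

end aux

/-- Bohr inequality for bounded analytic functions vanishing at the origin:
if `f(z) = ∑_{n≥1} a_n z^n` with `|f| ≤ 1` on 𝔻, then `∑_{n≥1} |a_n| r^n ≤ 1`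
for all `0 ≤ r ≤ 1/√2`. -/
theorem bohr_vanishing_at_origin (f : ℂ → ℂ) (a : ℕ → ℂ) (ha0 : a 0 = 0)
    (hf : ∀ z ∈ Metric.ball (0 : ℂ) 1, HasSum (fun n : ℕ => a n * z ^ n) (f z))
    (hb : ∀ z ∈ Metric.ball (0 : ℂ) 1, ‖f z‖ ≤ 1) :
    ∀ r : ℝ, 0 ≤ r → r ≤ 1 / Real.sqrt 2 → ∑' n : ℕ, ‖a n‖ * r ^ n ≤ 1 := by
  intro r hr0 hr1
  -- ℓ² bound on the coefficients
  have hsq : ∀ s : Finset ℕ, ∑ n ∈ s, ‖a n‖ ^ 2 ≤ 1 := by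
    intro s
    have hcont : Continuous fun ρ : ℝ => ∑ n ∈ s, (‖a n‖ * ρ ^ n) ^ 2 := by
      continuity
    have htends : Tendsto (fun ρ : ℝ => ∑ n ∈ s, (‖a n‖ * ρ ^ n) ^ 2)
        (nhdsWithin 1 (Set.Iio 1)) (𝓝 (∑ n ∈ s, ‖a n‖ ^ 2)) := by
      have h := (hcont.tendsto 1).mono_left
        (nhdsWithin_le_nhds : 𝓝[Set.Iio 1] (1 : ℝ) ≤ 𝓝 1)
      simpa using h
    refine le_of_tendsto htends ?_
    filter_upwards [Ioo_mem_nhdsLT_of_mem (show (1 : ℝ) ∈ Set.Ioc (0 : ℝ) 1 by norm_num)]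
      with ρ hρ
    exact bohr_aux_rho f a hf hb hρ.1.le hρ.2 s
  have hsummable2 : Summable fun n => ‖a n‖ ^ 2 :=
    summable_of_sum_le (fun n => sq_nonneg _) hsq
  have htsum2 : ∑' n : ℕ, ‖a n‖ ^ 2 ≤ 1 := Summable.tsum_le_of_sum_le hsummable2 hsq
  -- geometric facts about r
  have hsqrt2 : (1 : ℝ) < Real.sqrt 2 := by
    have : (1 : ℝ) = Real.sqrt 1 := (Real.sqrt_one).symm
    rw [this]
    exact Real.sqrt_lt_sqrt (by norm_num) (by norm_num)
  have hr1' : r < 1 := lt_of_le_of_lt hr1 (by rw [div_lt_one (by linarith)]; exact hsqrt2)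
  have hr2 : r ^ 2 ≤ 1 / 2 := by
    have h := pow_le_pow_left₀ hr0 hr1 2
    rwa [div_pow, one_pow, Real.sq_sqrt (by norm_num : (0:ℝ) ≤ 2)] at h
  have hr2' : r ^ 2 < 1 := lt_of_le_of_lt hr2 (by norm_num)
  -- the modified geometric sequence
  set v : ℕ → ℝ := fun n => if n = 0 then 0 else r ^ n with hv
  have hv0 : ∀ n, 0 ≤ v n := by
    intro n
    rw [hv]
    dsimp only
    split
    · exact le_refl 0
    · positivity
  have hva : ∀ n, ‖a n‖ * r ^ n = ‖a n‖ * v n := by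
    intro n
    rcases Nat.eq_zero_or_pos n with h | h
    · subst h; simp [ha0, hv]
    · rw [hv]; simp [Nat.pos_iff_ne_zero.mp h]
  have hvsq : ∀ n, v n ^ 2 ≤ (r ^ 2) ^ n := by
    intro n
    rw [hv]
    dsimp only
    split
    · norm_num
      positivity
    · rw [← pow_mul, ← pow_mul, mul_comm]
  have hvsummable : Summable fun n => v n ^ 2 :=
    (summable_geometric_of_lt_one (by positivity) hr2').of_nonneg_of_le
      (fun n => sq_nonneg _) hvsq
  have htsumv : ∑' n : ℕ, v n ^ 2 ≤ 1 := by
    have h1 : ∑' n : ℕ, v n ^ 2 = ∑' n : ℕ, v (n + 1) ^ 2 := by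
      rw [Summable.tsum_eq_zero_add hvsummable]
      simp [hv]
    have h2 : (fun n : ℕ => v (n + 1) ^ 2) = fun n : ℕ => r ^ 2 * (r ^ 2) ^ n := by
      funext n
      rw [hv]
      simp only []
      rw [if_neg (Nat.succ_ne_zero n)]
      ring
    rw [h1, h2, tsum_mul_left, tsum_geometric_of_lt_one (by positivity) hr2']
    rw [mul_inv_le_iff₀ (by linarith)]
    linarith
  -- summability of the main series
  have hsummable : Summable fun n => ‖a n‖ * r ^ n := by
    refine ((hsummable2.add hvsummable).div_const 2).of_nonneg_of_le
      (fun n => by positivity) fun n => ?_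
    rw [hva]
    have := sq_nonneg (‖a n‖ - v n)
    nlinarith [hv0 n, norm_nonneg (a n)]
  -- Cauchy–Schwarz on finite sums
  refine Summable.tsum_le_of_sum_le hsummable fun s => ?_
  have hrw : ∑ n ∈ s, ‖a n‖ * r ^ n = ∑ n ∈ s, ‖a n‖ * v n :=
    Finset.sum_congr rfl fun n _ => hva n
  rw [hrw]
  have hcs := Finset.sum_mul_sq_le_sq_mul_sq s (fun n => ‖a n‖) v
  have h1 : ∑ n ∈ s, ‖a n‖ ^ 2 ≤ 1 := hsq s
  have h2 : ∑ n ∈ s, v n ^ 2 ≤ 1 :=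
    le_trans (Summable.sum_le_tsum s (fun n _ => sq_nonneg _) hvsummable) htsumv
  have hnn : 0 ≤ ∑ n ∈ s, ‖a n‖ * v n :=
    Finset.sum_nonneg fun n _ => mul_nonneg (norm_nonneg _) (hv0 n)
  nlinarith [Finset.sum_nonneg (fun n (_ : n ∈ s) => sq_nonneg (‖a n‖)),
    Finset.sum_nonneg (fun n (_ : n ∈ s) => sq_nonneg (v n))]
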